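/- Every unlabeled forest on n vertices with more than k ≥ 2 trees can be partitioned into an ordered pair of nonempty forests (F₁, F₂) such that |F₁| + |F₂| = n, F₁ has at least ⌊k/2⌋ vertices, and |F₂| ≥ |F₁|. Consequently, the number of unlabeled forests on n vertices with more than k trees is at most ∑_{ℓ=⌊k/2⌋}^{⌊n/2⌋} f_ℓ·f_{n-ℓ}. -/

import Mathlib

open SimpleGraph

/-- The setoid of graph isomorphism on simple graphs on the vertex set `Fin n`. -/
def graphIsoSetoid (n : ℕ) : Setoid (SimpleGraph (Fin n)) where
  r G H := Nonempty (G ≃g H)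
  iseqv := ⟨fun _ => ⟨Iso.refl⟩, fun ⟨e⟩ => ⟨e.symm⟩, fun ⟨e⟩ ⟨f⟩ => ⟨e.trans f⟩⟩

/-- Unlabeled trees on `n` vertices: isomorphism classes of connected acyclic graphs. -/
def UnlabTree (n : ℕ) : Type :=
  Quotient (Setoid.comap (Subtype.val : {G : SimpleGraph (Fin n) // G.Connected ∧ G.IsAcyclic}
    → SimpleGraph (Fin n)) (graphIsoSetoid n))

/-- An unlabeled forest: a multiset of unlabeled trees (each tagged with its size). -/
abbrev Forest : Type := Multiset (Σ n : ℕ, UnlabTree n)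

/-- The size (number of vertices) of a forest. -/
def Forest.size (F : Forest) : ℕ := (Multiset.map Sigma.fst F).sum

/-- The number of unlabeled forests on `m` vertices. -/
noncomputable def f (m : ℕ) : ℕ := Nat.card {F : Forest // F.size = m}

-- basic instances
instance (n : ℕ) : Finite (UnlabTree n) := by
  unfold UnlabTree; exact Quotient.finite _

instance : IsEmpty (UnlabTree 0) := by
  constructor
  intro t
  induction t using Quotient.ind with
  | _ G => exact (Fin.pos_iff_nonempty.mpr G.2.1.nonempty).false

lemma fst_pos (a : Σ n, UnlabTree n) : 1 ≤ a.1 := by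
  rcases a with ⟨n, t⟩
  cases n with
  | zero => exact (IsEmpty.false t).elim
  | succ n => exact Nat.succ_le_succ (Nat.zero_le _)

-- list auxiliary lemmas
lemma list_length_le_sum (l : List ℕ) (h : ∀ x ∈ l, 1 ≤ x) : l.length ≤ l.sum := by
  induction l with
  | nil => simp
  | cons a t ih =>
    simp only [List.length_cons, List.sum_cons]
    have h1 := h a (List.mem_cons_self (a := a) (l := t))
    have h2 := ih (fun x hx => h x (List.mem_cons_of_mem a hx))
    omega

lemma list_sum_le_sum (A B : List ℕ) (hlen : A.length ≤ B.length)
    (hab : ∀ a ∈ A, ∀ b ∈ B, a ≤ b) : A.sum ≤ B.sum := by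
  induction A generalizing B with
  | nil => simp
  | cons a A' ih =>
    cases B with
    | nil => simp at hlen
    | cons b B' =>
      simp only [List.sum_cons]
      have h1 : a ≤ b := hab a (List.mem_cons_self (a := a) (l := A')) b (List.mem_cons_self (a := b) (l := B'))
      have h2 := ih B' (by simpa using hlen)
        (fun x hx y hy => hab x (List.mem_cons_of_mem a hx) y (List.mem_cons_of_mem b hy))
      omega

lemma size_coe (l : List (Σ n : ℕ, UnlabTree n)) :
    Forest.size (l : Forest) = (l.map Sigma.fst).sum := by
  simp [Forest.size]

-- the key split lemma
lemma split_exists (k : ℕ) (hk : 2 ≤ k) (F : Forest) (hc : k < Multiset.card F) :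
    ∃ F₁ F₂ : Forest, F₁ ≠ 0 ∧ F₂ ≠ 0 ∧ F₁ + F₂ = F ∧
      k / 2 ≤ F₁.size ∧ F₁.size ≤ F₂.size := by
  classical
  set m := k / 2 with hm
  have hm1 : 1 ≤ m := (Nat.one_le_div_iff (by norm_num)).mpr hk
  have h2m : 2 * m ≤ k := by omega
  set le : (Σ n : ℕ, UnlabTree n) → (Σ n : ℕ, UnlabTree n) → Bool :=
    fun a b => decide (a.1 ≤ b.1) with hle
  set L : List (Σ n : ℕ, UnlabTree n) := F.toList.mergeSort le with hL
  have hperm : L.Perm F.toList := List.mergeSort_perm _ _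
  have hLF : (L : Forest) = F := by
    rw [← Multiset.coe_toList F]
    exact Multiset.coe_eq_coe.mpr hperm
  have hlen : L.length = Multiset.card F := by
    rw [← Multiset.coe_card, hLF]
  have hsorted : L.Pairwise (fun a b => a.1 ≤ b.1) := by
    have := List.pairwise_mergeSort (le := le)
      (fun a b c hab hbc => by simp [hle] at *; omega)
      (fun a b => by simp [hle]; omega) F.toList
    exact this.imp (fun h => by simpa [hle] using h)
  refine ⟨(L.take m : List _), (L.drop m : List _), ?_, ?_, ?_, ?_, ?_⟩
  · simp only [ne_eq, Multiset.coe_eq_zero, ← List.length_eq_zero_iff]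
    rw [List.length_take]
    omega
  · simp only [ne_eq, Multiset.coe_eq_zero, ← List.length_eq_zero_iff]
    rw [List.length_drop]
    omega
  · rw [Multiset.coe_add, List.take_append_drop, hLF]
  · rw [size_coe]
    have h1 : ((L.take m).map Sigma.fst).length ≤ ((L.take m).map Sigma.fst).sum :=
      list_length_le_sum _ (by
        intro x hx
        simp only [List.mem_map] at hx
        obtain ⟨a, _, rfl⟩ := hx
        exact fst_pos a)
    rw [List.length_map, List.length_take] at h1
    omega
  · rw [size_coe, size_coe]
    have hcross : ∀ a ∈ L.take m, ∀ b ∈ L.drop m, a.1 ≤ b.1 := by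
      have hp : (L.take m ++ L.drop m).Pairwise (fun a b => a.1 ≤ b.1) := by
        rw [List.take_append_drop]; exact hsorted
      exact (List.pairwise_append.mp hp).2.2
    apply list_sum_le_sum
    · rw [List.length_map, List.length_map, List.length_take, List.length_drop]
      omega
    · intro x hx y hy
      simp only [List.mem_map] at hx hy
      obtain ⟨a, ha, rfl⟩ := hx
      obtain ⟨b, hb, rfl⟩ := hy
      exact hcross a ha b hb

lemma list_le_sum_of_mem {x : ℕ} {l : List ℕ} (h : x ∈ l) : x ≤ l.sum := by
  induction l with
  | nil => simp at h
  | cons a t ih =>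
    simp only [List.mem_cons] at h
    rcases h with rfl | h
    · simp
    · have := ih h; simp only [List.sum_cons]; omega

lemma size_add (F₁ F₂ : Forest) : (F₁ + F₂).size = F₁.size + F₂.size := by
  simp [Forest.size]

lemma card_le_size (F : Forest) : Multiset.card F ≤ F.size := by
  rw [← Multiset.coe_toList F, Multiset.coe_card, size_coe]
  have := list_length_le_sum (F.toList.map Sigma.fst) (by
    intro x hx
    simp only [List.mem_map] at hx
    obtain ⟨a, _, rfl⟩ := hx
    exact fst_pos a)
  simpa using this

lemma fst_le_size {a : Σ n : ℕ, UnlabTree n} {F : Forest} (h : a ∈ F) : a.1 ≤ F.size := by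
  rw [← Multiset.coe_toList F] at h ⊢
  rw [size_coe]
  exact list_le_sum_of_mem (List.mem_map_of_mem (f := Sigma.fst) (by simpa using h))

lemma multiset_setOf_card_le_finite {β : Type*} [Finite β] (m : ℕ) :
    {s : Multiset β | Multiset.card s ≤ m}.Finite := by
  induction m with
  | zero =>
    apply Set.Finite.subset (Set.finite_singleton (0 : Multiset β))
    intro s hs
    simp only [Set.mem_setOf_eq, Nat.le_zero, Multiset.card_eq_zero] at hs
    simp [hs]
  | succ m ih =>
    apply Set.Finite.subset ((Set.Finite.image2 (· ::ₘ ·) Set.finite_univ ih).insert 0)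
    intro s hs
    by_cases h : s = 0
    · simp [h]
    · obtain ⟨a, ha⟩ := Multiset.exists_mem_of_ne_zero h
      obtain ⟨t, rfl⟩ := Multiset.exists_cons_of_mem ha
      right
      refine Set.mem_image2_of_mem (Set.mem_univ a) ?_
      simp only [Set.mem_setOf_eq] at hs ⊢
      simp only [Multiset.card_cons] at hs
      omega

instance sigma_le_finite (m : ℕ) : Finite {a : Σ n : ℕ, UnlabTree n // a.1 ≤ m} := by
  apply Finite.of_injective
    (fun a : {a : Σ n : ℕ, UnlabTree n // a.1 ≤ m} =>
      (⟨⟨a.1.1, Nat.lt_succ_of_le a.2⟩, a.1.2⟩ : Σ i : Fin (m + 1), UnlabTree i))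
  rintro ⟨⟨n, t⟩, hn⟩ ⟨⟨n', t'⟩, hn'⟩ h
  simp only [Sigma.mk.inj_iff, Fin.mk.injEq] at h
  obtain ⟨h1, h2⟩ := h
  subst h1
  exact Subtype.ext (Sigma.ext rfl h2)

lemma forest_size_finite (m : ℕ) : {F : Forest | F.size = m}.Finite := by
  classical
  have hsub : {F : Forest | F.size = m} ⊆
      (fun s : Multiset {a : Σ n : ℕ, UnlabTree n // a.1 ≤ m} => s.map Subtype.val) ''
      {s | Multiset.card s ≤ m} := by
    intro F hF
    simp only [Set.mem_setOf_eq] at hF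
    refine ⟨F.attach.map (fun x => ⟨x.1, hF ▸ fst_le_size x.2⟩), ?_, ?_⟩
    · simp only [Set.mem_setOf_eq, Multiset.card_map, Multiset.card_attach]
      exact hF ▸ card_le_size F
    · simp [Multiset.map_map]
  exact Set.Finite.subset (Set.Finite.image _ (multiset_setOf_card_le_finite m)) hsub

instance forest_subtype_finite (m : ℕ) : Finite {F : Forest // F.size = m} :=
  (forest_size_finite m).to_subtype


/-- every forest on `n` vertices with more than `k ≥ 2` trees splits into
an ordered pair of nonempty forests `(F₁, F₂)` with `|F₁| + |F₂| = n`, `|F₁| ≥ ⌊k/2⌋` and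
`|F₂| ≥ |F₁|`; consequently, the number of forests on `n` vertices with more than `k`
trees is at most `∑_{ℓ=⌊k/2⌋}^{⌊n/2⌋} f_ℓ f_{n-ℓ}`. -/
theorem forest_split (n k : ℕ) (hk : 2 ≤ k) :
    (∀ F : Forest, F.size = n → k < Multiset.card F →
      ∃ F₁ F₂ : Forest, F₁ ≠ 0 ∧ F₂ ≠ 0 ∧ F₁ + F₂ = F ∧
        F₁.size + F₂.size = n ∧ k / 2 ≤ F₁.size ∧ F₁.size ≤ F₂.size) ∧
    Nat.card {F : Forest // F.size = n ∧ k < Multiset.card F} ≤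
      ∑ ℓ ∈ Finset.Icc (k / 2) (n / 2), f ℓ * f (n - ℓ) := by
  classical
  constructor
  · intro F hF hc
    obtain ⟨F₁, F₂, h1, h2, h3, h4, h5⟩ := split_exists k hk F hc
    refine ⟨F₁, F₂, h1, h2, h3, ?_, h4, h5⟩
    rw [← size_add, h3, hF]
  · have key : ∀ F : {F : Forest // F.size = n ∧ k < Multiset.card F},
        ∃ p : Forest × Forest, p.1 + p.2 = F.1 ∧ k / 2 ≤ p.1.size ∧ p.1.size ≤ p.2.size := by
      intro F
      obtain ⟨F₁, F₂, _, _, h3, h4, h5⟩ := split_exists k hk F.1 F.2.2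
      exact ⟨(F₁, F₂), h3, h4, h5⟩
    choose p hp1 hp2 hp3 using key
    have hsz : ∀ F, (p F).1.size + (p F).2.size = n := by
      intro F; rw [← size_add, hp1, F.2.1]
    have hmem : ∀ F, (p F).1.size ∈ Finset.Icc (k / 2) (n / 2) := by
      intro F
      refine Finset.mem_Icc.mpr ⟨hp2 F, ?_⟩
      have h1 := hsz F
      have h2 := hp3 F
      omega
    have hg2 : ∀ F, (p F).2.size = n - (p F).1.size := by
      intro F; have := hsz F; omega
    let T := Σ ℓ : (Finset.Icc (k / 2) (n / 2) : Finset ℕ),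
      {F : Forest // F.size = ℓ.1} × {F : Forest // F.size = n - ℓ.1}
    let g : {F : Forest // F.size = n ∧ k < Multiset.card F} → T :=
      fun F => ⟨⟨(p F).1.size, hmem F⟩, ⟨(p F).1, rfl⟩, ⟨(p F).2, hg2 F⟩⟩
    have hginj : Function.Injective g := by
      intro F G h
      have h2 := congrArg (fun x : T => ((x.2.1 : Forest), (x.2.2 : Forest))) h
      have e1 : (p F).1 = (p G).1 := congrArg Prod.fst h2
      have e2 : (p F).2 = (p G).2 := congrArg Prod.snd h2
      apply Subtype.ext
      rw [← hp1 F, ← hp1 G, e1, e2]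
    letI I1 : ∀ m : ℕ, Fintype {F : Forest // F.size = m} := fun m => Fintype.ofFinite _
    calc Nat.card {F : Forest // F.size = n ∧ k < Multiset.card F}
        ≤ Nat.card T := Nat.card_le_card_of_injective g hginj
      _ = ∑ ℓ ∈ Finset.Icc (k / 2) (n / 2), f ℓ * f (n - ℓ) := by
          rw [Nat.card_eq_fintype_card, Fintype.card_sigma,
            ← Finset.sum_coe_sort (Finset.Icc (k / 2) (n / 2))]
          refine Finset.sum_congr rfl (fun ℓ _ => ?_)
          rw [Fintype.card_prod]
          simp [f, Nat.card_eq_fintype_card]
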